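/- Let φ₁, φ₂ ∈ C¹([0,b]) with φⱼ(0)=φⱼ'(0)=0, 0 < φ₁(t) < φ₂(t) for t ∈ (0,b], define S₁, S₂ as the graphs of φ₁, φ₂ over (0,b], and suppose liminf_{x→0} (φ₂(x)−φ₁(x))/φ₁(x) > 0. Then there exist μ > 0 and a Lipschitz function g ≥ 0 on ℝ such that, after restricting to a subinterval (0,b'], S₁ ⊂ {ξ+iη : 0 < η < g(ξ)} and S₂ ⊂ {ξ+iη : η > (1+μ)g(ξ)}; one may take g = (φ₁+φ₂)/2 extended by 0. -/

import Mathlib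

open Set Filter Topology

/-- If two tangent graphs satisfy `liminf_{x→0} (φ₂−φ₁)/φ₁ > 0`, then after
shrinking the interval they are separated by the corridor between `g` and
`(1+μ)g` for a Lipschitz `g ≥ 0` and some `μ > 0`. -/
theorem stmt_17 (b : ℝ) (hb : 0 < b) (φ₁ φ₂ : ℝ → ℝ)
    (h₁ : ContDiffOn ℝ 1 φ₁ (Set.Icc 0 b)) (h₂ : ContDiffOn ℝ 1 φ₂ (Set.Icc 0 b))
    (h10 : φ₁ 0 = 0) (h20 : φ₂ 0 = 0)
    (h1d : derivWithin φ₁ (Set.Icc 0 b) 0 = 0)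
    (h2d : derivWithin φ₂ (Set.Icc 0 b) 0 = 0)
    (hpos : ∀ t ∈ Set.Ioc 0 b, 0 < φ₁ t ∧ φ₁ t < φ₂ t)
    (hliminf : 0 < Filter.liminf (fun x => (φ₂ x - φ₁ x) / φ₁ x)
      (nhdsWithin 0 (Set.Ioi 0))) :
    ∃ μ > 0, ∃ b' ∈ Set.Ioc 0 b, ∃ g : ℝ → ℝ,
      (∃ L : NNReal, LipschitzWith L g) ∧ (∀ ξ, 0 ≤ g ξ) ∧
      ∀ t ∈ Set.Ioc 0 b', φ₁ t < g t ∧ (1 + μ) * g t < φ₂ t := by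
  set f : ℝ → ℝ := fun x => (φ₂ x - φ₁ x) / φ₁ x with hf
  -- f is eventually nonnegative near 0 from the right
  have hIoc : Ioc (0:ℝ) b ∈ 𝓝[>] (0:ℝ) :=
    mem_of_superset (Ioo_mem_nhdsGT_of_mem ⟨le_refl 0, hb⟩) Ioo_subset_Ioc_self
  have hev0 : ∀ᶠ x in 𝓝[>] (0:ℝ), (0:ℝ) ≤ f x := by
    filter_upwards [hIoc] with x hx
    have h1 := hpos x hx
    exact div_nonneg (by linarith [h1.2]) h1.1.le
  have hbd : Filter.IsBoundedUnder (· ≥ ·) (𝓝[>] (0:ℝ)) f :=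
    isBoundedUnder_of_eventually_ge hev0
  set c : ℝ := Filter.liminf f (𝓝[>] (0:ℝ)) / 2 with hc
  have hcpos : 0 < c := by positivity
  have hclt : c < Filter.liminf f (𝓝[>] (0:ℝ)) := by rw [hc]; linarith
  have hev : ∀ᶠ x in 𝓝[>] (0:ℝ), c < f x :=
    Filter.eventually_lt_of_lt_liminf hclt hbd
  obtain ⟨ε, hε, hball⟩ := Metric.mem_nhdsWithin_iff.mp hev
  have hevε : ∀ x : ℝ, 0 < x → dist x 0 < ε → c < f x := fun x hx hd =>
    hball ⟨Metric.mem_ball.mpr hd, hx⟩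
  set b' : ℝ := min b (ε / 2) with hb'def
  have hb'pos : 0 < b' := lt_min hb (by positivity)
  have hb'b : b' ≤ b := min_le_left _ _
  have hb'ε : b' < ε := (min_le_right _ _).trans_lt (by linarith)
  -- the key strict inequality on (0, b']
  have key : ∀ t ∈ Ioc (0:ℝ) b', c * φ₁ t < φ₂ t - φ₁ t := by
    intro t ht
    have htb : t ∈ Ioc (0:ℝ) b := ⟨ht.1, ht.2.trans hb'b⟩
    have hφ := hpos t htb
    have hct : c < f t := by
      apply hevε t ht.1
      rw [Real.dist_eq, sub_zero, abs_of_pos ht.1]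
      exact lt_of_le_of_lt ht.2 hb'ε
    calc c * φ₁ t < f t * φ₁ t := mul_lt_mul_of_pos_right hct hφ.1
      _ = φ₂ t - φ₁ t := by
        rw [hf]; field_simp [ne_of_gt hφ.1]
  -- the midline function and its Lipschitz extension
  set h : ℝ → ℝ := fun t => (φ₁ t + φ₂ t) / 2 with hh
  have hhc : ContDiffOn ℝ 1 h (Icc 0 b') := by
    apply ContDiffOn.div_const
    exact ((h₁.mono (Icc_subset_Icc le_rfl hb'b)).add
      (h₂.mono (Icc_subset_Icc le_rfl hb'b)))
  have hud : UniqueDiffOn ℝ (Icc (0:ℝ) b') := uniqueDiffOn_Icc hb'pos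
  have hcontd : ContinuousOn (fun x => fderivWithin ℝ h (Icc 0 b') x) (Icc 0 b') :=
    hhc.continuousOn_fderivWithin hud le_rfl
  obtain ⟨C, hC⟩ := (isCompact_Icc).exists_bound_of_continuousOn hcontd
  set L : NNReal := ⟨max C 0, le_max_right _ _⟩ with hL
  have hlip : LipschitzOnWith L h (Icc 0 b') := by
    apply (convex_Icc _ _).lipschitzOnWith_of_nnnorm_fderivWithin_le
      (hhc.differentiableOn one_ne_zero)
    intro x hx
    have := hC x hx
    rw [← NNReal.coe_le_coe, coe_nnnorm]
    exact this.trans (le_max_left _ _)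
  set g : ℝ → ℝ := fun ξ => h ((projIcc 0 b' hb'pos.le ξ : ℝ)) with hg
  have hglip : LipschitzWith L g := by
    have := hlip.to_restrict.comp (LipschitzWith.projIcc hb'pos.le)
    simpa [hg, Function.comp_def, Set.domRestrict, Set.restrict] using this.weaken (by simp)
  have hnn : ∀ s ∈ Icc (0:ℝ) b', 0 ≤ h s := by
    intro s hs
    rcases eq_or_lt_of_le hs.1 with rfl | hs0
    · simp [hh, h10, h20]
    · have := hpos s ⟨hs0, hs.2.trans hb'b⟩
      rw [hh]; dsimp only; linarith [this.1, this.2]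
  refine ⟨c / (2 + c), by positivity, b', ⟨hb'pos, hb'b⟩, g, ⟨L, hglip⟩, ?_, ?_⟩
  · intro ξ
    exact hnn _ (projIcc 0 b' hb'pos.le ξ).2
  · intro t ht
    have htb : t ∈ Ioc (0:ℝ) b := ⟨ht.1, ht.2.trans hb'b⟩
    have hφ := hpos t htb
    have hkey := key t ht
    have hgt : g t = h t := by
      show h ((projIcc 0 b' hb'pos.le t : ℝ)) = h t
      rw [projIcc_of_mem hb'pos.le ⟨ht.1.le, ht.2⟩]
    have hμ : c / (2 + c) * (2 + c) = c := by field_simp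
    constructor
    · rw [hgt, hh]; dsimp only; linarith [hφ.2]
    · rw [hgt, hh]; dsimp only
      have h2c : (0:ℝ) < 2 + c := by linarith
      nlinarith [hkey, hφ.1, hcpos, mul_pos hcpos hφ.1]
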